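/- Let X be an infinite-dimensional real Banach space that fails the Schur property, i.e., there exists a sequence in X converging weakly but not converging in norm. Then there exists an equivalent norm N on X such that (X, N) contains a super Δ-point: there is x₀ with N(x₀) = 1 such that for every relatively weakly open subset W of B_N = {y : N(y) ≤ 1} with x₀ ∈ W one has sup_{y ∈ W} N(x₀ − y) = 2. -/

import Mathlib

open NormedSpace Topology Filter

/-- `N` is an equivalent norm on the normed space `Z`. -/
def IsEquivNorm (Z : Type*) [NormedAddCommGroup Z] [NormedSpace ℝ Z] (N : Z → ℝ) : Prop :=
  (∀ z w : Z, N (z + w) ≤ N z + N w) ∧ (∀ (a : ℝ) (z : Z), N (a • z) = |a| * N z) ∧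
  (∃ c C : ℝ, 0 < c ∧ 0 < C ∧ ∀ z : Z, c * ‖z‖ ≤ N z ∧ N z ≤ C * ‖z‖)

/-- The norm `N` on `Z` admits a super Δ-point: a point `z₀` with `N z₀ = 1` such that
every relatively weakly open subset of the `N`-unit ball containing `z₀` contains points
whose `N`-distance to `z₀` is arbitrarily close to `2`.  (The weak topology is unchanged
under equivalent renormings, so it is the weak topology of the original norm.) -/
def HasSuperDeltaPointForNorm (Z : Type*) [NormedAddCommGroup Z] [NormedSpace ℝ Z]
    (N : Z → ℝ) : Prop :=
  ∃ z₀ : Z, N z₀ = 1 ∧ ∀ U : Set Z, IsOpen (toWeakSpace ℝ Z '' U) → z₀ ∈ U →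
    sSup ((fun y => N (z₀ - y)) '' ({y : Z | N y ≤ 1} ∩ U)) = 2

open Metric Set
open scoped Pointwise

section AuxiliaryLemmas

variable {X : Type*} [NormedAddCommGroup X] [NormedSpace ℝ X]

/-- A simple recursion principle producing a sequence from a step function that may
inspect all previous values. -/
noncomputable def seqRec {α : Type*} (step : (n : ℕ) → (Fin n → α) → α) : ℕ → α
  | n => step n (fun j => seqRec step j)
termination_by n => n
decreasing_by exact j.isLt

theorem seqRec_eq {α : Type*} (step : (n : ℕ) → (Fin n → α) → α) (n : ℕ) :
    seqRec step n = step n (fun j => seqRec step j) := by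
  rw [seqRec]

theorem dual_le_gauge {K : Set X} (hK : Absorbent ℝ K) (f : X →L[ℝ] ℝ)
    (hf : ∀ y ∈ K, f y ≤ 1) (x : X) : f x ≤ gauge K x := by
  refine le_csInf hK.gauge_set_nonempty ?_
  rintro t ⟨ht, y, hy, rfl⟩
  have : f (t • y) = t * f y := by simp
  rw [this]
  calc t * f y ≤ t * 1 := by nlinarith [hf y hy]
  _ = t := mul_one t


theorem exists_functional_vanishing (F : Submodule ℝ X) (x : X)
    (hx : ∀ p ∈ F, (1:ℝ)/8 ≤ ‖x - p‖) :
    ∃ g : X →L[ℝ] ℝ, ‖g‖ ≤ 9 ∧ g x = 1 ∧ ∀ p ∈ F, g p = 0 := by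
  set S : Set X := (F : Set X) + Metric.ball (0 : X) (1/8) with hS
  have hSopen : IsOpen S := IsOpen.add_left isOpen_ball
  have hSconv : Convex ℝ S := (F.convex).add (convex_ball _ _)
  have hmemS : ∀ (p : X), p ∈ F → ∀ b : X, ‖b‖ < 1/8 → p + b ∈ S := by
    intro p hp b hb
    exact Set.add_mem_add hp (by simpa [mem_ball, dist_eq_norm] using hb)
  have hxS : x ∉ S := by
    rintro ⟨p, hp, b, hb, rfl⟩
    rw [mem_ball, dist_eq_norm, sub_zero] at hb
    have h := hx p hp
    rw [show p + b - p = b from by abel] at h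
    linarith
  obtain ⟨f, hf⟩ := geometric_hahn_banach_open_point hSconv hSopen hxS
  have hfx0 : 0 < f x := by
    have := hf 0 (by simpa using hmemS 0 F.zero_mem 0 (by norm_num))
    simpa using this
  have hfF : ∀ p ∈ F, f p = 0 := by
    intro p hp
    by_contra hne
    have key : ∀ t : ℝ, t * f p < f x := by
      intro t
      have := hf (t • p) (by simpa using hmemS (t • p) (F.smul_mem t hp) 0 (by norm_num))
      simpa using this
    have := key ((f x + 1) / f p)
    rw [div_mul_cancel₀ _ hne] at this
    linarith
  have hfb : ∀ b : X, ‖b‖ < 1/8 → f b < f x := by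
    intro b hb
    have := hf (0 + b) (hmemS 0 F.zero_mem b hb)
    simpa using this
  have hfnorm : ∀ y : X, |f y| ≤ 9 * f x * ‖y‖ := by
    intro y
    rcases eq_or_ne y 0 with rfl | hy
    · simp
    · have hny : 0 < ‖y‖ := norm_pos_iff.mpr hy
      set b : X := (1 / (9 * ‖y‖)) • y with hbdef
      have hbn : ‖b‖ < 1/8 := by
        have hb9 : ‖b‖ = 1/9 := by
          rw [hbdef, norm_smul, Real.norm_eq_abs, abs_of_pos (by positivity)]
          field_simp
        rw [hb9]; norm_num
      have h1 := hfb b hbn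
      have h2 := hfb (-b) (by simpa using hbn)
      have hfb' : f b = (1 / (9 * ‖y‖)) * f y := by simp [hbdef]
      have hfnb : f (-b) = -((1 / (9 * ‖y‖)) * f y) := by simp [hbdef]
      rw [hfb'] at h1; rw [hfnb] at h2
      rw [one_div_mul_eq_div] at h1 h2
      have h1' : f y < f x * (9 * ‖y‖) := (div_lt_iff₀ (by positivity)).mp h1
      have h2' : -f y < f x * (9 * ‖y‖) := by
        have := (div_lt_iff₀ (show (0:ℝ) < 9 * ‖y‖ by positivity)).mp
          (by rw [neg_div]; exact neg_lt_of_neg_lt (by linarith [h2]) : -(f y) / (9 * ‖y‖) < f x)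
        linarith [this]
      rw [abs_le]
      constructor <;> nlinarith
  refine ⟨(f x)⁻¹ • f, ?_, by simp [inv_mul_cancel₀ (ne_of_gt hfx0)], fun p hp => by
    simp [hfF p hp]⟩
  refine ContinuousLinearMap.opNorm_le_bound _ (by norm_num) ?_
  intro y
  have := hfnorm y
  rw [ContinuousLinearMap.smul_apply, norm_smul, Real.norm_eq_abs, Real.norm_eq_abs,
    abs_of_pos (inv_pos.mpr hfx0)]
  rw [inv_mul_le_iff₀ hfx0]
  calc |f y| ≤ 9 * f x * ‖y‖ := this
  _ = f x * (9 * ‖y‖) := by ring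

theorem exists_good_index (w : ℕ → X)
    (hwnull : ∀ φ : X →L[ℝ] ℝ, Tendsto (fun n => φ (w n)) atTop (𝓝 0))
    (hlb : ∀ n, (1:ℝ)/2 ≤ ‖w n‖) (hub : ∀ n, ‖w n‖ ≤ 3/2)
    (F : Submodule ℝ X) (hF : FiniteDimensional ℝ F)
    {ι : Type*} [Finite ι] (g : ι → X →L[ℝ] ℝ) {ε : ℝ} (hε : 0 < ε) (N : ℕ) :
    ∃ m, N ≤ m ∧ (∀ p ∈ F, (1:ℝ)/8 ≤ ‖w m - p‖) ∧ ∀ j : ι, |g j (w m)| ≤ ε := by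
  by_contra hcon
  push_neg at hcon
  have hev : ∀ᶠ m in atTop, N ≤ m ∧ ∀ j : ι, |g j (w m)| ≤ ε := by
    refine (eventually_ge_atTop N).and (eventually_all.mpr fun j => ?_)
    have := (hwnull (g j)).eventually (Metric.ball_mem_nhds (0:ℝ) hε)
    filter_upwards [this] with n hn
    rw [Real.dist_eq, sub_zero] at hn
    exact hn.le
  have hbad : ∀ᶠ m in atTop, ∃ p : F, ‖w m - p‖ < 1/8 := by
    filter_upwards [hev] with m hm
    obtain ⟨hm1, hm2⟩ := hm
    by_contra hno
    push_neg at hno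
    obtain ⟨j, hj⟩ := hcon m hm1 (fun p hp => by simpa using hno ⟨p, hp⟩)
    exact absurd hj (not_lt.mpr (hm2 j))
  obtain ⟨N₁, hN₁⟩ := eventually_atTop.mp hbad
  have hpick : ∀ i : ℕ, ∃ p : F, ‖w (N₁ + i) - p‖ < 1/8 :=
    fun i => hN₁ (N₁ + i) (Nat.le_add_right _ _)
  choose q hq using hpick
  have hqball : ∀ i, q i ∈ closedBall (0 : F) 2 := by
    intro i
    rw [mem_closedBall, dist_zero_right]
    have h1 : ‖(q i : X)‖ ≤ ‖w (N₁ + i)‖ + ‖w (N₁ + i) - q i‖ := by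
      have h2 : (q i : X) = w (N₁ + i) - (w (N₁ + i) - q i) := by abel
      calc ‖(q i : X)‖ = ‖w (N₁ + i) - (w (N₁ + i) - q i)‖ := by rw [← h2]
      _ ≤ _ := norm_sub_le _ _
    have : ‖q i‖ = ‖(q i : X)‖ := rfl
    rw [this]
    linarith [hq i, hub (N₁ + i)]
  haveI := hF
  obtain ⟨plim, _, φ, hφmono, hφtend⟩ :=
    (isCompact_closedBall (0 : F) 2).tendsto_subseq hqball
  have hcoe : Tendsto (fun i => ((q (φ i) : X))) atTop (𝓝 (plim : X)) :=
    (continuous_subtype_val.tendsto _).comp hφtend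
  have hidx : Tendsto (fun i => N₁ + φ i) atTop atTop :=
    Tendsto.nonneg_add_atTop (fun _ => Nat.zero_le _) hφmono.tendsto_atTop
  have hwm : ∀ ψ : X →L[ℝ] ℝ, Tendsto (fun i => ψ (w (N₁ + φ i))) atTop (𝓝 0) :=
    fun ψ => (hwnull ψ).comp hidx
  have hpnorm : ‖(plim : X)‖ ≤ 1/8 := by
    rcases eq_or_ne (plim : X) 0 with h0 | h0
    · rw [h0]; norm_num
    · obtain ⟨ψ, hψ1, hψ2⟩ := exists_dual_vector ℝ (plim : X) (norm_ne_zero_iff.mpr h0)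
      have ha : Tendsto (fun i => ψ ((q (φ i) : X))) atTop (𝓝 (ψ (plim : X))) :=
        (ψ.continuous.tendsto _).comp hcoe
      have hb : Tendsto (fun i => (1:ℝ)/8 + |ψ (w (N₁ + φ i))|) atTop (𝓝 (1/8 + |0|)) :=
        tendsto_const_nhds.add ((continuous_abs.tendsto _).comp (hwm ψ))
      have hab : ∀ i, ψ ((q (φ i) : X)) ≤ 1/8 + |ψ (w (N₁ + φ i))| := by
        intro i
        have : ψ ((q (φ i) : X)) = ψ ((q (φ i) : X) - w (N₁ + φ i)) + ψ (w (N₁ + φ i)) := by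
          rw [← map_add]; congr 1; abel
        rw [this]
        have h1 : |ψ ((q (φ i) : X) - w (N₁ + φ i))| ≤ ‖(q (φ i) : X) - w (N₁ + φ i)‖ := by
          calc |ψ _| ≤ ‖ψ‖ * ‖(q (φ i) : X) - w (N₁ + φ i)‖ := ψ.le_opNorm _
          _ = _ := by rw [hψ1, one_mul]
        have h2 : ‖(q (φ i) : X) - w (N₁ + φ i)‖ < 1/8 := by
          rw [norm_sub_rev]; exact hq (φ i)
        have := abs_le.mp h1
        have := le_abs_self (ψ (w (N₁ + φ i)))
        linarith
      have hle := le_of_tendsto_of_tendsto' ha hb hab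
      have hψ2' : ψ (plim : X) = ‖(plim : X)‖ := by exact_mod_cast hψ2
      rw [hψ2'] at hle
      simpa using hle
  have hqp : ∀ᶠ i in atTop, ‖(q (φ i) : X) - (plim : X)‖ < 1/8 := by
    have := tendsto_iff_norm_sub_tendsto_zero.mp hcoe
    have h8 := this.eventually (Metric.ball_mem_nhds (0:ℝ) (show (0:ℝ) < 1/8 by norm_num))
    filter_upwards [h8] with i hi
    rw [Real.dist_eq, sub_zero, abs_norm] at hi
    exact hi
  obtain ⟨i, hi⟩ := hqp.exists
  have hcontr : ‖w (N₁ + φ i)‖ < 1/2 := by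
    calc ‖w (N₁ + φ i)‖
        = ‖(w (N₁ + φ i) - q (φ i)) + ((q (φ i) : X) - plim) + (plim : X)‖ := by
          congr 1; abel
    _ ≤ ‖(w (N₁ + φ i) - q (φ i)) + ((q (φ i) : X) - plim)‖ + ‖(plim : X)‖ := norm_add_le _ _
    _ ≤ ‖w (N₁ + φ i) - q (φ i)‖ + ‖(q (φ i) : X) - plim‖ + ‖(plim : X)‖ := by
          linarith [norm_add_le (w (N₁ + φ i) - (q (φ i):X)) ((q (φ i) : X) - plim)]
    _ < 1/8 + 1/8 + 1/8 := by linarith [hq (φ i)]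
    _ < 1/2 := by norm_num
  linarith [hlb (N₁ + φ i)]

theorem exists_selection (w : ℕ → X)
    (hwnull : ∀ φ : X →L[ℝ] ℝ, Tendsto (fun n => φ (w n)) atTop (𝓝 0))
    (hlb : ∀ n, (1:ℝ)/2 ≤ ‖w n‖) (hub : ∀ n, ‖w n‖ ≤ 3/2) (z₀ : X) :
    ∃ (k : ℕ → ℕ) (g : ℕ → X →L[ℝ] ℝ), ∀ n : ℕ,
      n ≤ k n ∧ ‖g n‖ ≤ 9 ∧ g n (w (k n)) = 1 ∧ g n z₀ = 0 ∧
      (∀ j, j < n → g n (w (k j)) = 0) ∧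
      (∀ j, j < n → |g j (w (k n))| ≤ (1/2:ℝ)^n) := by
  have hstep : ∀ (n : ℕ) (prev : Fin n → ℕ × (X →L[ℝ] ℝ)), ∃ s : ℕ × (X →L[ℝ] ℝ),
      n ≤ s.1 ∧ ‖s.2‖ ≤ 9 ∧ s.2 (w s.1) = 1 ∧ s.2 z₀ = 0 ∧
      (∀ j : Fin n, s.2 (w (prev j).1) = 0) ∧
      (∀ j : Fin n, |(prev j).2 (w s.1)| ≤ (1/2:ℝ)^n) := by
    intro n prev
    set F := Submodule.span ℝ (insert z₀ (Set.range fun j : Fin n => w (prev j).1)) with hF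
    haveI : FiniteDimensional ℝ F :=
      FiniteDimensional.span_of_finite ℝ ((Set.finite_range _).insert z₀)
    obtain ⟨m, hm1, hm2, hm3⟩ := exists_good_index w hwnull hlb hub F ‹_›
      (fun j : Fin n => (prev j).2) (show (0:ℝ) < (1/2)^n by positivity) n
    obtain ⟨g, hg1, hg2, hg3⟩ := exists_functional_vanishing F (w m) hm2
    refine ⟨(m, g), hm1, hg1, hg2, ?_, ?_, hm3⟩
    · exact hg3 z₀ (Submodule.subset_span (Set.mem_insert _ _))
    · intro j
      exact hg3 _ (Submodule.subset_span (Set.mem_insert_of_mem _ ⟨j, rfl⟩))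
  choose step hstepspec using hstep
  set s := seqRec step with hs
  have hspec : ∀ n, n ≤ (s n).1 ∧ ‖(s n).2‖ ≤ 9 ∧ (s n).2 (w (s n).1) = 1 ∧
      (s n).2 z₀ = 0 ∧ (∀ j : Fin n, (s n).2 (w (s j).1) = 0) ∧
      (∀ j : Fin n, |(s j).2 (w (s n).1)| ≤ (1/2:ℝ)^n) := by
    intro n
    have he : s n = step n (fun j : Fin n => s j) := seqRec_eq step n
    rw [he]
    exact hstepspec n _
  refine ⟨fun n => (s n).1, fun n => (s n).2, fun n => ?_⟩
  obtain ⟨h1, h2, h3, h4, h5, h6⟩ := hspec n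
  exact ⟨h1, h2, h3, h4, fun j hj => h5 ⟨j, hj⟩, fun j hj => h6 ⟨j, hj⟩⟩

end AuxiliaryLemmas

set_option maxHeartbeats 1000000 in
/-- Every infinite-dimensional real Banach space failing the Schur property admits an
equivalent norm with a super Δ-point. -/
theorem renorming_superDeltaPoint_of_not_schur
    (X : Type*) [NormedAddCommGroup X] [NormedSpace ℝ X] [CompleteSpace X]
    (hinf : ¬ FiniteDimensional ℝ X)
    (hschur : ∃ (xs : ℕ → X) (a : X),
      (∀ f : StrongDual ℝ X, Tendsto (fun n => f (xs n)) atTop (nhds (f a))) ∧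
      ¬ Tendsto xs atTop (nhds a)) :
    ∃ N : X → ℝ, IsEquivNorm X N ∧ HasSuperDeltaPointForNorm X N := by
  classical
  obtain ⟨xs, a, hwk, hnc⟩ := hschur
  -- Step 1: a normalized weakly null sequence
  rw [Metric.tendsto_atTop] at hnc
  push_neg at hnc
  obtain ⟨ε, hε, hfreq⟩ := hnc
  obtain ⟨φ, hφmono, hφ⟩ :=
    Filter.extraction_of_frequently_atTop (frequently_atTop.mpr hfreq)
  have hεn : ∀ n, ε ≤ ‖xs (φ n) - a‖ := fun n => by
    have := hφ n; rwa [dist_eq_norm] at this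
  have hpos : ∀ n, (0:ℝ) < ‖xs (φ n) - a‖ := fun n => lt_of_lt_of_le hε (hεn n)
  set u : ℕ → X := fun n => ‖xs (φ n) - a‖⁻¹ • (xs (φ n) - a) with hu
  have hu1 : ∀ n, ‖u n‖ = 1 := by
    intro n
    rw [hu, norm_smul, norm_inv, norm_norm, inv_mul_cancel₀ (ne_of_gt (hpos n))]
  have hbase : ∀ ψ : X →L[ℝ] ℝ, Tendsto (fun n => ψ (xs n - a)) atTop (𝓝 0) := by
    intro ψ
    have := (hwk ψ).sub (tendsto_const_nhds (x := ψ a))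
    simpa [map_sub] using this
  have hunull : ∀ ψ : X →L[ℝ] ℝ, Tendsto (fun n => ψ (u n)) atTop (𝓝 0) := by
    intro ψ
    have hb := (hbase ψ).comp hφmono.tendsto_atTop
    refine squeeze_zero_norm (a := fun n => ε⁻¹ * ‖ψ (xs (φ n) - a)‖) ?_ ?_
    · intro n
      have hterm : ‖ψ (u n)‖ = ‖xs (φ n) - a‖⁻¹ * ‖ψ (xs (φ n) - a)‖ := by
        rw [hu]
        dsimp only
        rw [map_smul, norm_smul, Real.norm_eq_abs, abs_inv, abs_norm]
      rw [hterm]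
      have hinv : ‖xs (φ n) - a‖⁻¹ ≤ ε⁻¹ := by
        gcongr
        exact hεn n
      exact mul_le_mul_of_nonneg_right hinv (norm_nonneg _)
    · have := hb.norm.const_mul ε⁻¹
      simpa using this
  -- Step 2: z₀ and its norming functional
  set z₀ : X := u 0 with hz₀def
  have hz₀ : ‖z₀‖ = 1 := hu1 0
  have hz₀ne : z₀ ≠ 0 := by
    intro h; rw [h, norm_zero] at hz₀; norm_num at hz₀
  obtain ⟨f₀, hf₀n, hf₀z'⟩ := exists_dual_vector ℝ z₀ (norm_ne_zero_iff.mpr hz₀ne)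
  have hf₀z : f₀ z₀ = 1 := by rw [hf₀z', hz₀]; norm_num
  obtain ⟨N₀, hN₀⟩ := Metric.tendsto_atTop.mp (hunull f₀) (1/2) (by norm_num)
  have hfu : ∀ n, |f₀ (u (n + N₀))| < 1/2 := by
    intro n
    have := hN₀ (n + N₀) (Nat.le_add_left _ _)
    rwa [Real.dist_eq, sub_zero] at this
  -- Step 3: the sequence w, weakly null, in ker f₀, seminormalized
  set w : ℕ → X := fun n => u (n + N₀) - (f₀ (u (n + N₀))) • z₀ with hwdef
  have hf₀w : ∀ n, f₀ (w n) = 0 := by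
    intro n
    rw [hwdef]
    simp [map_sub, map_smul, smul_eq_mul, hf₀z]
  have hwlb : ∀ n, (1:ℝ)/2 ≤ ‖w n‖ := by
    intro n
    have h1 : ‖(f₀ (u (n + N₀))) • z₀‖ ≤ 1/2 := by
      rw [norm_smul, Real.norm_eq_abs, hz₀, mul_one]
      exact (hfu n).le
    have h2 := norm_sub_norm_le (u (n + N₀)) ((f₀ (u (n + N₀))) • z₀)
    rw [hu1 (n + N₀)] at h2
    rw [hwdef]
    dsimp only
    linarith
  have hwub : ∀ n, ‖w n‖ ≤ 3/2 := by
    intro n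
    have h1 : ‖(f₀ (u (n + N₀))) • z₀‖ ≤ 1/2 := by
      rw [norm_smul, Real.norm_eq_abs, hz₀, mul_one]
      exact (hfu n).le
    have h2 := norm_sub_le (u (n + N₀)) ((f₀ (u (n + N₀))) • z₀)
    rw [hu1 (n + N₀)] at h2
    rw [hwdef]
    dsimp only
    linarith
  have hwnull : ∀ ψ : X →L[ℝ] ℝ, Tendsto (fun n => ψ (w n)) atTop (𝓝 0) := by
    intro ψ
    have t1 := (hunull ψ).comp (tendsto_add_atTop_nat N₀)
    have t2 := ((hunull f₀).comp (tendsto_add_atTop_nat N₀)).mul_const (ψ z₀)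
    have := t1.sub t2
    rw [hwdef]
    simpa [map_sub, map_smul, smul_eq_mul, Function.comp] using this
  -- Step 4: selection of subsequence and biorthogonal functionals
  obtain ⟨k, g, hsel⟩ := exists_selection w hwnull hwlb hwub z₀
  set d : ℕ → X := fun n => w (k n) with hddef
  have hdnull : ∀ ψ : X →L[ℝ] ℝ, Tendsto (fun n => ψ (d n)) atTop (𝓝 0) := by
    intro ψ
    exact (hwnull ψ).comp (tendsto_atTop_mono (fun n => (hsel n).1) tendsto_id)
  have hg9 : ∀ n, ‖g n‖ ≤ 9 := fun n => (hsel n).2.1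
  have hgd : ∀ n, g n (d n) = 1 := fun n => (hsel n).2.2.1
  have hgz : ∀ n, g n z₀ = 0 := fun n => (hsel n).2.2.2.1
  have hgd0 : ∀ n j, j < n → g n (d j) = 0 := fun n j hj => (hsel n).2.2.2.2.1 j hj
  have hgsm : ∀ n j, j < n → |g j (d n)| ≤ (1/2:ℝ)^n := fun n j hj => (hsel n).2.2.2.2.2 j hj
  have hdub : ∀ n, ‖d n‖ ≤ 3/2 := fun n => hwub (k n)
  have hf₀d : ∀ n, f₀ (d n) = 0 := fun n => hf₀w (k n)
  -- Step 5: the renorming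
  set D : Set X := {v | ‖v‖ < 1/19 ∨ v = z₀ ∨ v = -z₀ ∨ (∃ n, v = z₀ - d n) ∨
    (∃ n, v = -(z₀ - d n))} with hD
  set K : Set X := convexHull ℝ D with hK
  have hDK : D ⊆ K := subset_convexHull ℝ D
  have hballD : Metric.ball (0:X) (1/19) ⊆ D := by
    intro v hv
    rw [mem_ball_zero_iff] at hv
    exact Or.inl hv
  have habs : Absorbent ℝ K :=
    (absorbent_ball_zero (by norm_num : (0:ℝ) < 1/19)).mono (hballD.trans hDK)
  have hconv : Convex ℝ K := convex_convexHull ℝ D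
  have hDmem : ∀ v ∈ D, -v ∈ D := by
    rintro v (h | h | h | ⟨n, h⟩ | ⟨n, h⟩)
    · exact Or.inl (by rwa [norm_neg])
    · exact Or.inr (Or.inr (Or.inl (by rw [h])))
    · exact Or.inr (Or.inl (by rw [h, neg_neg]))
    · exact Or.inr (Or.inr (Or.inr (Or.inr ⟨n, by rw [h]⟩)))
    · exact Or.inr (Or.inr (Or.inr (Or.inl ⟨n, by rw [h, neg_neg]⟩)))
  have hDsymm : -D = D := by
    ext v
    rw [Set.mem_neg]
    constructor
    · intro h
      have := hDmem (-v) h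
      rwa [neg_neg] at this
    · intro h
      exact hDmem v h
  have hKsymm : ∀ x ∈ K, -x ∈ K := by
    intro x hx
    have hKneg : -K = K := by rw [hK, ← convexHull_neg, hDsymm]
    rw [← hKneg, Set.neg_mem_neg]
    exact hx
  have hDsub3 : D ⊆ Metric.closedBall (0:X) 3 := by
    intro v hv
    rw [mem_closedBall_zero_iff]
    rcases hv with h | h | h | ⟨n, h⟩ | ⟨n, h⟩
    · linarith
    · rw [h, hz₀]; norm_num
    · rw [h, norm_neg, hz₀]; norm_num
    · rw [h]
      calc ‖z₀ - d n‖ ≤ ‖z₀‖ + ‖d n‖ := norm_sub_le _ _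
      _ ≤ 1 + 3/2 := by rw [hz₀]; linarith [hdub n]
      _ ≤ 3 := by norm_num
    · rw [h, norm_neg]
      calc ‖z₀ - d n‖ ≤ ‖z₀‖ + ‖d n‖ := norm_sub_le _ _
      _ ≤ 1 + 3/2 := by rw [hz₀]; linarith [hdub n]
      _ ≤ 3 := by norm_num
  have hK3 : K ⊆ Metric.closedBall (0:X) 3 := convexHull_min hDsub3 (convex_closedBall _ _)
  -- the new norm
  refine ⟨gauge K, ⟨?_, ?_, ⟨1/3, 19, by norm_num, by norm_num, ?_⟩⟩, ?_⟩
  · exact fun z w' => gauge_add_le hconv habs z w'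
  · intro b z
    rcases le_or_gt 0 b with hb | hb
    · rw [gauge_smul_of_nonneg hb, smul_eq_mul, abs_of_nonneg hb]
    · have h1 : b • z = -((-b) • z) := by rw [neg_smul, neg_neg]
      rw [h1, gauge_neg hKsymm, gauge_smul_of_nonneg (by linarith : (0:ℝ) ≤ -b),
        smul_eq_mul, abs_of_neg hb]
  · intro z
    constructor
    · have := le_gauge_of_subset_closedBall habs (by norm_num : (0:ℝ) ≤ 3) hK3 (x := z)
      rw [div_eq_inv_mul] at this
      calc (1:ℝ)/3 * ‖z‖ = 3⁻¹ * ‖z‖ := by norm_num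
      _ ≤ gauge K z := this
    · have h1 : gauge K z ≤ gauge (Metric.ball (0:X) (1/19)) z :=
        gauge_mono (absorbent_ball_zero (by norm_num)) (hballD.trans hDK) z
      rw [gauge_ball (by norm_num : (0:ℝ) ≤ 1/19)] at h1
      calc gauge K z ≤ ‖z‖ / (1/19) := h1
      _ = 19 * ‖z‖ := by ring
  -- super Delta point
  have hf₀K : ∀ v ∈ K, f₀ v ≤ 1 := by
    intro v hv
    have hcvx : Convex ℝ {v : X | f₀ v ≤ 1} := by
      exact convex_halfSpace_le (f₀ : X →ₗ[ℝ] ℝ).isLinear 1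
    refine convexHull_min ?_ hcvx hv
    intro v' hv'
    simp only [Set.mem_setOf_eq]
    rcases hv' with h | h | h | ⟨n, h⟩ | ⟨n, h⟩
    · calc f₀ v' ≤ ‖f₀‖ * ‖v'‖ := le_trans (le_abs_self _) (f₀.le_opNorm v')
      _ ≤ 1 * (1/19) := by
        apply mul_le_mul (le_of_eq hf₀n) h.le (norm_nonneg _) zero_le_one
      _ ≤ 1 := by norm_num
    · rw [h, hf₀z]
    · rw [h, map_neg, hf₀z]; norm_num
    · rw [h, map_sub, hf₀z, hf₀d n]; norm_num
    · rw [h, map_neg, map_sub, hf₀z, hf₀d n]; norm_num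
  have hNz₀ : gauge K z₀ = 1 := by
    refine le_antisymm (gauge_le_one_of_mem (hDK (Or.inr (Or.inl rfl)))) ?_
    have := dual_le_gauge habs f₀ hf₀K z₀
    rwa [hf₀z] at this
  have hyK : ∀ n, gauge K (z₀ - d n) ≤ 1 := fun n =>
    gauge_le_one_of_mem (hDK (Or.inr (Or.inr (Or.inr (Or.inl ⟨n, rfl⟩)))))
  -- lower bound on gauge K (d n)
  have hlow : ∀ n, 2/(1 + 2*(1/2:ℝ)^n) ≤ gauge K (d n) := by
    intro n
    set c : ℝ := 2*(1/2:ℝ)^n with hc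
    have hcpos : 0 < c := by positivity
    set G : X →L[ℝ] ℝ := (1+c)⁻¹ • (f₀ + (2:ℝ) • g n) with hG
    have hGD : ∀ v ∈ D, (f₀ + (2:ℝ) • g n) v ≤ 1 + c := by
      rintro v (h | h | h | ⟨m, h⟩ | ⟨m, h⟩)
      · have hbound : ‖f₀ + (2:ℝ) • g n‖ ≤ 19 := by
          have hsm := _root_.norm_smul_le (2:ℝ) (g n)
          rw [Real.norm_eq_abs] at hsm
          have habs2 : |(2:ℝ)| = 2 := by norm_num
          rw [habs2] at hsm
          calc ‖f₀ + (2:ℝ) • g n‖ ≤ ‖f₀‖ + ‖(2:ℝ) • g n‖ := norm_add_le _ _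
          _ ≤ 19 := by rw [hf₀n]; linarith [hg9 n]
        calc (f₀ + (2:ℝ) • g n) v ≤ ‖f₀ + (2:ℝ) • g n‖ * ‖v‖ :=
          le_trans (le_abs_self _) ((f₀ + (2:ℝ) • g n).le_opNorm v)
        _ ≤ 19 * (1/19) := by
          apply mul_le_mul hbound h.le (norm_nonneg _) (by norm_num)
        _ ≤ 1 + c := by norm_num; linarith
      · rw [h]
        simp only [ContinuousLinearMap.add_apply, ContinuousLinearMap.smul_apply, smul_eq_mul]
        rw [hf₀z, hgz n]
        linarith
      · rw [h]
        simp only [map_neg, ContinuousLinearMap.add_apply, ContinuousLinearMap.smul_apply,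
          smul_eq_mul]
        rw [hf₀z, hgz n]
        linarith
      · rw [h]
        simp only [map_sub, ContinuousLinearMap.add_apply, ContinuousLinearMap.smul_apply,
          smul_eq_mul]
        rw [hf₀z, hgz n, hf₀d m]
        rcases lt_trichotomy m n with hmn | hmn | hmn
        · rw [hgd0 n m hmn]; linarith
        · rw [hmn, hgd n]; linarith
        · have h1 : |g n (d m)| ≤ (1/2:ℝ)^m := hgsm m n hmn
          have h2 : ((1:ℝ)/2)^m ≤ (1/2:ℝ)^n :=
            pow_le_pow_of_le_one (by norm_num) (by norm_num) hmn.le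
          have := abs_le.mp h1
          rw [hc]
          linarith
      · rw [h]
        simp only [map_neg, map_sub, ContinuousLinearMap.add_apply,
          ContinuousLinearMap.smul_apply, smul_eq_mul]
        rw [hf₀z, hgz n, hf₀d m]
        rcases lt_trichotomy m n with hmn | hmn | hmn
        · rw [hgd0 n m hmn]; linarith
        · rw [hmn, hgd n]; linarith
        · have h1 : |g n (d m)| ≤ (1/2:ℝ)^m := hgsm m n hmn
          have h2 : ((1:ℝ)/2)^m ≤ (1/2:ℝ)^n :=
            pow_le_pow_of_le_one (by norm_num) (by norm_num) hmn.le
          have := abs_le.mp h1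
          rw [hc]
          linarith
    have hGK : ∀ v ∈ K, G v ≤ 1 := by
      intro v hv
      have hcvx : Convex ℝ {v : X | (f₀ + (2:ℝ) • g n) v ≤ 1 + c} :=
        convex_halfSpace_le ((f₀ + (2:ℝ) • g n) : X →ₗ[ℝ] ℝ).isLinear (1+c)
      have h1 : (f₀ + (2:ℝ) • g n) v ≤ 1 + c := convexHull_min hGD hcvx hv
      rw [hG]
      simp only [ContinuousLinearMap.smul_apply, smul_eq_mul]
      rw [inv_mul_le_iff₀ (by linarith : (0:ℝ) < 1 + c), mul_one]
      exact h1
    have := dual_le_gauge habs G hGK (d n)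
    have hGdn : G (d n) = 2/(1+c) := by
      rw [hG]
      simp only [ContinuousLinearMap.smul_apply, ContinuousLinearMap.add_apply,
        ContinuousLinearMap.smul_apply, smul_eq_mul]
      rw [hf₀d n, hgd n]
      ring
    rw [hGdn] at this
    exact this
  -- assemble the super Delta point property
  refine ⟨z₀, hNz₀, ?_⟩
  intro U hU hz₀U
  set S := (fun y => gauge K (z₀ - y)) '' ({y : X | gauge K y ≤ 1} ∩ U) with hS
  have hub2 : ∀ s ∈ S, s ≤ 2 := by
    rintro s ⟨y, ⟨hy1, hyU⟩, rfl⟩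
    have h1 : gauge K (z₀ - y) ≤ gauge K z₀ + gauge K (-y) := by
      rw [sub_eq_add_neg]
      exact gauge_add_le hconv habs z₀ (-y)
    rw [gauge_neg hKsymm, hNz₀] at h1
    simp only [Set.mem_setOf_eq] at hy1
    linarith
  have hne2 : S.Nonempty := ⟨gauge K (z₀ - z₀), ⟨z₀, ⟨hNz₀.le, hz₀U⟩, rfl⟩⟩
  -- weak convergence of z₀ - d n to z₀
  have hBinj : Function.Injective ⇑(topDualPairing ℝ X).flip := by
    intro x y hxy
    by_contra hne
    obtain ⟨ψ, _, hψ⟩ := exists_dual_vector ℝ (x - y) (norm_ne_zero_iff.mpr (sub_ne_zero.mpr hne))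
    have hxy' : ψ x = ψ y := by
      have := DFunLike.congr_fun hxy ψ
      simpa [topDualPairing_apply] using this
    have : ψ (x - y) = 0 := by rw [map_sub, hxy', sub_self]
    rw [hψ] at this
    exact sub_ne_zero.mpr hne (by
      have : ‖x - y‖ = 0 := by exact_mod_cast this
      exact norm_eq_zero.mp this)
  have htd : Tendsto (fun n => toWeakSpace ℝ X (z₀ - d n)) atTop
      (𝓝 (toWeakSpace ℝ X z₀)) := by
    refine (WeakBilin.tendsto_iff_forall_eval_tendsto _ hBinj).mpr ?_
    intro ψ
    have h1 : Tendsto (fun n => ψ z₀ - ψ (d n)) atTop (𝓝 (ψ z₀ - 0)) :=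
      tendsto_const_nhds.sub (hdnull ψ)
    rw [sub_zero] at h1
    have h2 : Tendsto (fun n => ψ (z₀ - d n)) atTop (𝓝 (ψ z₀)) := by
      have he : (fun n => ψ (z₀ - d n)) = fun n => ψ z₀ - ψ (d n) :=
        funext fun n => map_sub ψ z₀ (d n)
      rw [he]
      exact h1
    exact h2
  have hev : ∀ᶠ n in atTop, z₀ - d n ∈ U := by
    have hmem : toWeakSpace ℝ X z₀ ∈ toWeakSpace ℝ X '' U := ⟨z₀, hz₀U, rfl⟩
    have := htd.eventually (hU.mem_nhds hmem)
    filter_upwards [this] with n hn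
    obtain ⟨v, hvU, hv⟩ := hn
    rwa [← (toWeakSpace ℝ X).injective hv]
  refine le_antisymm (csSup_le hne2 hub2) ?_
  have hmemS : ∀ᶠ n in atTop, gauge K (d n) ≤ sSup S := by
    filter_upwards [hev] with n hn
    have hm : gauge K (d n) ∈ S := by
      refine ⟨z₀ - d n, ⟨hyK n, hn⟩, ?_⟩
      show gauge K (z₀ - (z₀ - d n)) = gauge K (d n)
      rw [sub_sub_cancel]
    exact le_csSup ⟨2, hub2⟩ hm
  have h2' : ∀ᶠ n in atTop, 2/(1+2*(1/2:ℝ)^n) ≤ sSup S :=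
    hmemS.mono fun n hn => le_trans (hlow n) hn
  have hlim : Tendsto (fun n => 2/(1+2*(1/2:ℝ)^n)) atTop (𝓝 2) := by
    have hp : Tendsto (fun n => ((1:ℝ)/2)^n) atTop (𝓝 0) :=
      tendsto_pow_atTop_nhds_zero_of_lt_one (by norm_num) (by norm_num)
    have hden : Tendsto (fun n => 1 + 2*((1:ℝ)/2)^n) atTop (𝓝 (1 + 2*0)) :=
      tendsto_const_nhds.add (hp.const_mul 2)
    have := (tendsto_const_nhds (x := (2:ℝ))).div hden (by norm_num)
    simpa [Pi.div_def] using this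
  exact le_of_tendsto hlim h2'
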